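/- For k dividing d, the KL divergence between the centered Gaussians with covariances Σ^{(d,k)}_{σ,ε} and its block-diagonal part Σ^{(d,k)}_σ equals KL(f_{Σ^{(d,k)}_{σ,ε}} ‖ f_{Σ^{(d,k)}_σ}) = −(1/2) log(1 + (d−k)ε/(1+(k−1)σ)) − (1/2)(d/k − 1) log(1 − kε/(1+(k−1)σ)), provided both matrices are positive definite. -/

import Mathlib

open Real MeasureTheory Matrix

/-- Centered multivariate Gaussian density with covariance `S0`. -/
noncomputable def gaussianDensity {d : ℕ} (S0 : Matrix (Fin d) (Fin d) ℝ)
    (x : Fin d → ℝ) : ℝ :=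
  (2 * Real.pi) ^ (-(d : ℝ) / 2) * S0.det ^ (-(1 : ℝ) / 2) *
    Real.exp (-(dotProduct x (S0⁻¹.mulVec x)) / 2)

/-- The matrix `Σ^{(d,k)}_{σ,ε}`: `1` on the diagonal, `σ` within consecutive blocks of
size `k`, and `ε` in all off-block entries. -/
noncomputable def SigmaMat (d k : ℕ) (σ ε : ℝ) : Matrix (Fin d) (Fin d) ℝ :=
  fun i j =>
    if i = j then 1
    else if (i : ℕ) / k = (j : ℕ) / k then σ
    else ε

section Aux

lemma integrable_g : Integrable (fun t : ℝ => Real.exp (-(1/2) * t^2)) :=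
  integrable_exp_neg_mul_sq (by norm_num)

lemma integrable_tg : Integrable (fun t : ℝ => t * Real.exp (-(1/2) * t^2)) :=
  integrable_mul_exp_neg_mul_sq (by norm_num)

lemma integrable_t2g : Integrable (fun t : ℝ => t^2 * Real.exp (-(1/2) * t^2)) := by
  have := integrable_rpow_mul_exp_neg_mul_sq (b := 1/2) (by norm_num) (s := 2) (by norm_num)
  simpa [Real.rpow_two] using this

lemma int_g : ∫ t : ℝ, Real.exp (-(1/2) * t^2) = Real.sqrt (2 * Real.pi) := by
  rw [integral_gaussian]
  rw [show Real.pi / (1/2) = 2 * Real.pi by ring]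

lemma int_tg : ∫ t : ℝ, t * Real.exp (-(1/2) * t^2) = 0 := by
  have hderiv : ∀ t : ℝ, HasDerivAt (fun t : ℝ => -Real.exp (-(1/2) * t^2))
      (t * Real.exp (-(1/2) * t^2)) t := by
    intro t
    have h1 : HasDerivAt (fun t : ℝ => -(1/2) * t^2) (-(1/2) * (2*t)) t :=
      (hasDerivAt_pow 2 t).const_mul _ |>.congr_deriv (by ring)
    have := (h1.exp).neg
    exact this.congr_deriv (by ring)
  exact integral_eq_zero_of_hasDerivAt_of_integrable hderiv integrable_tg integrable_g.neg

lemma int_t2g : ∫ t : ℝ, t^2 * Real.exp (-(1/2) * t^2) = Real.sqrt (2 * Real.pi) := by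
  have hderiv : ∀ t : ℝ, HasDerivAt (fun t : ℝ => t * Real.exp (-(1/2) * t^2))
      (Real.exp (-(1/2) * t^2) - t^2 * Real.exp (-(1/2) * t^2)) t := by
    intro t
    have h1 : HasDerivAt (fun t : ℝ => -(1/2) * t^2) (-t) t := by
      have := (hasDerivAt_pow 2 t).const_mul (-(1/2) : ℝ)
      exact this.congr_deriv (by norm_num; ring)
    have h2 := (hasDerivAt_id t).mul h1.exp
    exact h2.congr_deriv (by simp only [id, one_mul]; ring)
  have h0 := integral_eq_zero_of_hasDerivAt_of_integrable hderiv
    (integrable_g.sub integrable_t2g) integrable_tg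
  rw [integral_sub integrable_g integrable_t2g] at h0
  rw [← int_g]
  linarith



variable {d : ℕ}

noncomputable def Eg (y : Fin d → ℝ) : ℝ := ∏ i, Real.exp (-(1/2) * (y i)^2)

lemma Eg_pos (y : Fin d → ℝ) : 0 < Eg y := Finset.prod_pos fun i _ => Real.exp_pos _

lemma integrable_Eg : Integrable (fun y : Fin d → ℝ => Eg y) :=
  Integrable.fintype_prod (f := fun _ : Fin d => fun t : ℝ => Real.exp (-(1/2) * t^2))
    (fun _ => integrable_g)

lemma int_Eg : ∫ y : Fin d → ℝ, Eg y = Real.sqrt (2 * Real.pi) ^ d := by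
  rw [show (fun y : Fin d → ℝ => Eg y) = fun y => ∏ i, Real.exp (-(1/2) * (y i)^2) from rfl]
  rw [MeasureTheory.volume_pi, MeasureTheory.integral_fintype_prod_eq_pow (ι := Fin d) (fun t : ℝ => Real.exp (-(1/2) * t^2)),
    int_g]
  simp

/-- the factor functions for moments -/
noncomputable def hfun (i j l : Fin d) (t : ℝ) : ℝ :=
  (if l = i then t else 1) * (if l = j then t else 1) * Real.exp (-(1/2) * t^2)

lemma hfun_eq (i j : Fin d) (y : Fin d → ℝ) :
    ∏ l, hfun i j l (y l) = y i * y j * Eg y := by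
  unfold hfun Eg
  rw [Finset.prod_mul_distrib, Finset.prod_mul_distrib]
  congr 1
  congr 1
  · simp [Finset.prod_ite_eq' Finset.univ i (fun l => y l)]
  · simp [Finset.prod_ite_eq' Finset.univ j (fun l => y l)]

lemma integrable_hfun (i j l : Fin d) : Integrable (hfun i j l) := by
  unfold hfun
  by_cases hi : l = i
  · by_cases hj : l = j
    · simp only [if_pos hi, if_pos hj]
      simpa [pow_two, mul_assoc] using integrable_t2g
    · simp only [if_pos hi, if_neg hj, mul_one]
      exact integrable_tg
  · by_cases hj : l = j
    · simp only [if_neg hi, if_pos hj, one_mul]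
      exact integrable_tg
    · simp only [if_neg hi, if_neg hj, mul_one, one_mul]
      exact integrable_g

lemma integrable_moment (i j : Fin d) :
    Integrable (fun y : Fin d → ℝ => y i * y j * Eg y) := by
  have := Integrable.fintype_prod (f := hfun i j) (fun l => integrable_hfun i j l)
  simp only [hfun_eq] at this
  exact this

lemma int_moment (i j : Fin d) :
    ∫ y : Fin d → ℝ, y i * y j * Eg y
      = (if i = j then 1 else 0) * Real.sqrt (2 * Real.pi) ^ d := by
  have h1 : ∫ y : Fin d → ℝ, y i * y j * Eg y = ∏ l, ∫ t, hfun i j l t := by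
    rw [← MeasureTheory.integral_fintype_prod_eq_prod (ι := Fin d) (hfun i j)]
    congr 1
    ext y
    rw [hfun_eq]
  rw [h1]
  by_cases hij : i = j
  · subst hij
    have : ∀ l : Fin d, ∫ t, hfun i i l t = Real.sqrt (2 * Real.pi) := by
      intro l
      by_cases hl : l = i
      · subst hl
        have h2 : ∫ t, hfun l l l t = ∫ t, t^2 * Real.exp (-(1/2) * t^2) := by
          congr 1; ext t; simp [hfun, pow_two]
        rw [h2, int_t2g]
      · unfold hfun
        simp only [if_neg hl]
        simpa using int_g
    rw [Finset.prod_congr rfl (fun l _ => this l)]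
    simp
  · have hzero : ∫ t, hfun i j i t = 0 := by
      unfold hfun
      simp only [if_pos rfl, if_neg (fun h => hij (h ▸ rfl) : ¬ i = j)]
      simpa [mul_one] using int_tg
    rw [Finset.prod_eq_zero (Finset.mem_univ i) hzero]
    simp [hij]

lemma integrable_quad (N : Matrix (Fin d) (Fin d) ℝ) :
    Integrable (fun y : Fin d → ℝ => dotProduct y (N.mulVec y) * Eg y) := by
  have heq : (fun y : Fin d → ℝ => dotProduct y (N.mulVec y) * Eg y)
      = fun y => ∑ i, ∑ j, N i j * (y i * y j * Eg y) := by
    ext y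
    simp only [dotProduct, Matrix.mulVec, Finset.sum_mul]
    congr 1; ext i
    rw [Finset.mul_sum, Finset.sum_mul]
    congr 1; ext j; ring
  rw [heq]
  exact integrable_finset_sum _ (fun i _ =>
    integrable_finset_sum _ (fun j _ => (integrable_moment i j).const_mul _))

lemma int_quad (N : Matrix (Fin d) (Fin d) ℝ) :
    ∫ y : Fin d → ℝ, dotProduct y (N.mulVec y) * Eg y
      = N.trace * Real.sqrt (2 * Real.pi) ^ d := by
  have heq : (fun y : Fin d → ℝ => dotProduct y (N.mulVec y) * Eg y)
      = fun y => ∑ i, ∑ j, N i j * (y i * y j * Eg y) := by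
    ext y
    simp only [dotProduct, Matrix.mulVec, Finset.sum_mul]
    congr 1; ext i
    rw [Finset.mul_sum, Finset.sum_mul]
    congr 1; ext j; ring
  rw [heq, integral_finset_sum _ (fun i _ =>
    integrable_finset_sum _ (fun j _ => (integrable_moment i j).const_mul (N i j)))]
  have : ∀ i : Fin d, ∫ y : Fin d → ℝ, ∑ j, N i j * (y i * y j * Eg y)
      = N i i * Real.sqrt (2 * Real.pi) ^ d := by
    intro i
    rw [integral_finset_sum _ (fun j _ => (integrable_moment i j).const_mul (N i j))]
    have : ∀ j : Fin d, ∫ y : Fin d → ℝ, N i j * (y i * y j * Eg y)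
        = N i j * ((if i = j then 1 else 0) * Real.sqrt (2 * Real.pi) ^ d) := by
      intro j
      rw [integral_const_mul, int_moment]
    rw [Finset.sum_congr rfl (fun j _ => this j)]
    simp [Finset.mul_sum, Finset.sum_ite_eq Finset.univ i]
  rw [Finset.sum_congr rfl (fun i _ => this i), Matrix.trace]
  simp [Finset.sum_mul, Matrix.diag]




lemma continuous_quadForm (M : Matrix (Fin d) (Fin d) ℝ) :
    Continuous fun x : Fin d → ℝ => dotProduct x (M.mulVec x) := by
  unfold dotProduct Matrix.mulVec
  exact continuous_finset_sum _ fun i _ => (continuous_apply i).mul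
    (continuous_finset_sum _ fun j _ => continuous_const.mul (continuous_apply j))

lemma gaussianDensity_pos {A : Matrix (Fin d) (Fin d) ℝ} (hA : 0 < A.det) (x : Fin d → ℝ) :
    0 < gaussianDensity A x := by
  unfold gaussianDensity
  positivity

lemma continuous_gaussianDensity (A : Matrix (Fin d) (Fin d) ℝ) :
    Continuous (gaussianDensity A) := by
  unfold gaussianDensity
  exact continuous_const.mul (((continuous_quadForm A⁻¹).neg.div_const 2).rexp)

lemma dot_mulVec_left (L : Matrix (Fin d) (Fin d) ℝ) (y z : Fin d → ℝ) :
    dotProduct (L.mulVec y) z = dotProduct y ((Lᵀ).mulVec z) := by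
  rw [dotProduct_comm, Matrix.dotProduct_mulVec, dotProduct_comm, Matrix.mulVec_transpose]

open scoped MatrixOrder in
theorem gaussianKL {A B : Matrix (Fin d) (Fin d) ℝ} (hA : A.PosDef) (hB : B.PosDef) :
    ∫ x : Fin d → ℝ, Real.log (gaussianDensity A x / gaussianDensity B x) * gaussianDensity A x
      = 1/2 * (Real.log B.det - Real.log A.det) + 1/2 * ((B⁻¹ * A).trace - d) := by
  classical
  set L := CFC.sqrt A with hLdef
  have hLL : L * L = A := CFC.sqrt_mul_sqrt_self A hA.posSemidef.nonneg
  have hLT : Lᵀ = L := by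
    have h := (CFC.sqrt_nonneg A).posSemidef.1
    simpa [Matrix.IsHermitian, Matrix.conjTranspose_eq_transpose_of_trivial] using h
  have hdetA : 0 < A.det := hA.det_pos
  have hdetB : 0 < B.det := hB.det_pos
  have hdetL2 : L.det * L.det = A.det := by rw [← Matrix.det_mul, hLL]
  have hdetL : L.det ≠ 0 := by
    intro h
    rw [h, mul_zero] at hdetL2
    exact hdetA.ne' hdetL2.symm
  have hUL : IsUnit L.det := isUnit_iff_ne_zero.mpr hdetL
  have hUA : IsUnit A.det := isUnit_iff_ne_zero.mpr hdetA.ne'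
  have hUB : IsUnit B.det := isUnit_iff_ne_zero.mpr hdetB.ne'
  have habs : |L.det| = Real.sqrt A.det := by
    rw [← hdetL2, ← pow_two, Real.sqrt_sq_eq_abs]
  set N : Matrix (Fin d) (Fin d) ℝ := L * B⁻¹ * L with hNdef
  set c₀ : ℝ := 1/2 * (Real.log B.det - Real.log A.det) with hc0
  set cA : ℝ := (2 * Real.pi) ^ (-(d : ℝ) / 2) * A.det ^ (-(1:ℝ) / 2) with hcA
  set F : (Fin d → ℝ) → ℝ := fun x =>
    Real.log (gaussianDensity A x / gaussianDensity B x) * gaussianDensity A x with hF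
  have hgA : ∀ x, 0 < gaussianDensity A x := gaussianDensity_pos hdetA
  have hgB : ∀ x, 0 < gaussianDensity B x := gaussianDensity_pos hdetB
  have hFcont : Continuous F := by
    apply Continuous.mul _ (continuous_gaussianDensity A)
    apply Continuous.log
    · exact (continuous_gaussianDensity A).div (continuous_gaussianDensity B)
        (fun x => (hgB x).ne')
    · exact fun x => (div_pos (hgA x) (hgB x)).ne'
  -- change of variables
  have hmap : Measure.map (Matrix.toLin' L) volume
      = ENNReal.ofReal |L.det|⁻¹ • volume := by
    simpa [abs_inv] using Real.map_matrix_volume_pi_eq_smul_volume_pi (M := L) hdetL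
  have hvol : (volume : Measure (Fin d → ℝ))
      = ENNReal.ofReal |L.det| • Measure.map (Matrix.toLin' L) volume := by
    rw [hmap, smul_smul, ← ENNReal.ofReal_mul (abs_nonneg _),
      mul_inv_cancel₀ (abs_ne_zero.mpr hdetL), ENNReal.ofReal_one, one_smul]
  have hcov : ∫ x, F x = |L.det| * ∫ y, F (L.mulVec y) := by
    conv_lhs => rw [hvol]
    rw [integral_smul_measure, integral_map
      (Continuous.aemeasurable (LinearMap.continuous_on_pi _))
      hFcont.aestronglyMeasurable]
    simp only [Matrix.toLin'_apply, smul_eq_mul,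
      ENNReal.toReal_ofReal (abs_nonneg _)]
  -- pointwise identity
  have hEg : ∀ y : Fin d → ℝ, Real.exp (-(dotProduct y y) / 2) = Eg y := by
    intro y
    unfold Eg
    rw [← Real.exp_sum]
    congr 1
    unfold dotProduct
    have h1 : ∑ x, -(1/2) * y x ^ 2 = -(1/2) * ∑ x, y x * y x := by
      rw [Finset.mul_sum]
      exact Finset.sum_congr rfl fun x _ => by ring
    rw [h1]; ring
  have hconj : ∀ (M : Matrix (Fin d) (Fin d) ℝ) (y : Fin d → ℝ),
      dotProduct (L.mulVec y) (M.mulVec (L.mulVec y))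
        = dotProduct y ((L * M * L).mulVec y) := by
    intro M y
    rw [dot_mulVec_left, hLT, Matrix.mulVec_mulVec, Matrix.mulVec_mulVec]
  have hAinv : L * A⁻¹ * L = 1 := by
    rw [← hLL, Matrix.mul_inv_rev, ← Matrix.mul_assoc, Matrix.mul_nonsing_inv _ hUL,
      Matrix.one_mul, Matrix.nonsing_inv_mul _ hUL]
  have hpt : ∀ y : Fin d → ℝ, F (L.mulVec y)
      = cA * (c₀ * Eg y + (1/2) * (dotProduct y (N.mulVec y) * Eg y)
          - (1/2) * (dotProduct y ((1 : Matrix (Fin d) (Fin d) ℝ).mulVec y) * Eg y)) := by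
    intro y
    have hdA : dotProduct (L.mulVec y) (A⁻¹.mulVec (L.mulVec y))
        = dotProduct y ((1 : Matrix (Fin d) (Fin d) ℝ).mulVec y) := by
      rw [hconj, hAinv]
    have hdB : dotProduct (L.mulVec y) (B⁻¹.mulVec (L.mulVec y))
        = dotProduct y (N.mulVec y) := hconj B⁻¹ y
    have hgAval : gaussianDensity A (L.mulVec y) = cA * Eg y := by
      unfold gaussianDensity
      rw [hdA, hcA]
      rw [Matrix.one_mulVec, hEg y]
      try ring
    have hlog : Real.log (gaussianDensity A (L.mulVec y) / gaussianDensity B (L.mulVec y))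
        = c₀ + 1/2 * (dotProduct y (N.mulVec y))
          - 1/2 * (dotProduct y ((1 : Matrix (Fin d) (Fin d) ℝ).mulVec y)) := by
      rw [Real.log_div (hgA _).ne' (hgB _).ne']
      unfold gaussianDensity
      rw [Real.log_mul (by positivity) (Real.exp_ne_zero _),
          Real.log_mul (by positivity) (Real.exp_ne_zero _),
          Real.log_mul (by positivity) (by positivity),
          Real.log_mul (by positivity) (by positivity),
          Real.log_exp, Real.log_exp,
          Real.log_rpow hdetA, Real.log_rpow hdetB, hdA, hdB, hc0]
      ring
    rw [hF]
    simp only []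
    rw [hlog, hgAval]
    ring
  rw [hcov]
  have hint : ∫ y, F (L.mulVec y)
      = cA * (c₀ * (Real.sqrt (2*Real.pi))^d + (1/2) * (N.trace * (Real.sqrt (2*Real.pi))^d)
          - (1/2) * ((d : ℝ) * (Real.sqrt (2*Real.pi))^d)) := by
    have : (fun y : Fin d → ℝ => F (L.mulVec y)) = fun y =>
        cA * (c₀ * Eg y + (1/2) * (dotProduct y (N.mulVec y) * Eg y)
          - (1/2) * (dotProduct y ((1 : Matrix (Fin d) (Fin d) ℝ).mulVec y) * Eg y)) := by
      ext y; exact hpt y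
    rw [this, integral_const_mul]
    congr 1
    have h1a : Integrable (fun y : Fin d → ℝ => c₀ * Eg y) volume :=
      (integrable_Eg).const_mul c₀
    have h1b : Integrable
        (fun y : Fin d → ℝ => 1/2 * (dotProduct y (N.mulVec y) * Eg y)) volume :=
      (integrable_quad N).const_mul (1/2)
    have h1 : Integrable (fun y : Fin d → ℝ =>
        c₀ * Eg y + 1/2 * (dotProduct y (N.mulVec y) * Eg y)) volume := h1a.add h1b
    have h2 : Integrable (fun y : Fin d → ℝ =>
        1/2 * (dotProduct y ((1 : Matrix (Fin d) (Fin d) ℝ).mulVec y) * Eg y)) volume :=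
      (integrable_quad 1).const_mul (1/2)
    rw [integral_sub h1 h2, integral_add h1a h1b,
      integral_const_mul, integral_const_mul, integral_const_mul, int_Eg, int_quad, int_quad,
      Matrix.trace_one]
    simp
  rw [hint]
  have hNtr : N.trace = (B⁻¹ * A).trace := by
    rw [hNdef, Matrix.trace_mul_cycle, hLL, Matrix.trace_mul_comm]
  have hkey : |L.det| * (cA * (Real.sqrt (2*Real.pi))^d) = 1 := by
    rw [habs, hcA]
    have h2pi : (0:ℝ) < 2 * Real.pi := by positivity
    have hs : (Real.sqrt (2*Real.pi))^d = (2*Real.pi) ^ ((d:ℝ)/2) := by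
      rw [Real.sqrt_eq_rpow, ← Real.rpow_natCast ((2*Real.pi) ^ ((1:ℝ)/2)) d,
        ← Real.rpow_mul h2pi.le]
      ring_nf
    have hsA : Real.sqrt A.det = A.det ^ ((1:ℝ)/2) := Real.sqrt_eq_rpow _
    rw [hs, hsA]
    have e1 : A.det ^ ((1:ℝ)/2) * A.det ^ (-(1:ℝ)/2) = 1 := by
      rw [← Real.rpow_add hdetA, show (1:ℝ)/2 + -(1:ℝ)/2 = 0 by ring, Real.rpow_zero]
    have e2 : (2*Real.pi) ^ (-(d:ℝ)/2) * (2*Real.pi) ^ ((d:ℝ)/2) = 1 := by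
      rw [← Real.rpow_add h2pi, show -(d:ℝ)/2 + (d:ℝ)/2 = 0 by ring, Real.rpow_zero]
    have e3 : A.det ^ ((1:ℝ)/2) * ((2*Real.pi) ^ (-(d:ℝ)/2) * A.det ^ (-(1:ℝ)/2)
        * (2*Real.pi) ^ ((d:ℝ)/2))
        = (A.det ^ ((1:ℝ)/2) * A.det ^ (-(1:ℝ)/2))
          * ((2*Real.pi) ^ (-(d:ℝ)/2) * (2*Real.pi) ^ ((d:ℝ)/2)) := by ring
    rw [e3, e1, e2, one_mul]
  calc |L.det| * (cA * (c₀ * (Real.sqrt (2*Real.pi))^d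
        + (1/2) * (N.trace * (Real.sqrt (2*Real.pi))^d)
        - (1/2) * ((d : ℝ) * (Real.sqrt (2*Real.pi))^d)))
      = (|L.det| * (cA * (Real.sqrt (2*Real.pi))^d))
          * (c₀ + (1/2) * N.trace - (1/2) * d) := by ring
    _ = c₀ + (1/2) * N.trace - (1/2) * d := by rw [hkey, one_mul]
    _ = 1/2 * (Real.log B.det - Real.log A.det) + 1/2 * ((B⁻¹ * A).trace - d) := by
        rw [hNtr, hc0]; ring


lemma sum_ite_row {k : ℕ} (x y : ℝ) (r : Fin k) :
    ∑ r' : Fin k, (if r = r' then x else y) = x + ((k:ℝ)-1) * y := by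
  have h : ∀ r' : Fin k, (if r = r' then x else y) = y + (if r = r' then x - y else 0) := by
    intro r'; by_cases hr : r = r' <;> simp [hr]
  rw [Finset.sum_congr rfl fun r' _ => h r', Finset.sum_add_distrib, Finset.sum_const,
    Finset.sum_ite_eq Finset.univ r fun _ => x - y]
  simp [Finset.card_univ]
  ring

lemma det_ite {k : ℕ} (hk : 0 < k) (x y : ℝ) (h : x ≠ y ∨ k = 1) :
    (Matrix.of fun i j : Fin k => if i = j then x else y).det
      = (x - y)^(k-1) * (x + ((k:ℝ)-1) * y) := by
  rcases h with hxy | hk1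
  · have hxy' : x - y ≠ 0 := sub_ne_zero.mpr hxy
    have hM : (Matrix.of fun i j : Fin k => if i = j then x else y)
        = (x - y) • ((1 : Matrix (Fin k) (Fin k) ℝ)
          + Matrix.replicateCol Unit (fun _ => y/(x-y)) * Matrix.replicateRow Unit (fun _ => (1:ℝ))) := by
      ext i j
      by_cases hij : i = j
      · simp [Matrix.one_apply, Matrix.mul_apply, hij]
        field_simp
        ring
      · simp [Matrix.one_apply, Matrix.mul_apply, hij]
        field_simp
    rw [hM, Matrix.det_smul, Matrix.det_one_add_replicateCol_mul_replicateRow]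
    have hd : (fun _ : Fin k => (1:ℝ)) ⬝ᵥ (fun _ : Fin k => y/(x-y)) = (k:ℝ) * (y/(x-y)) := by
      simp [dotProduct, Finset.card_univ]
    rw [hd]
    obtain ⟨n, rfl⟩ : ∃ n, k = n + 1 := ⟨k - 1, (Nat.succ_pred_eq_of_pos hk).symm⟩
    simp only [Nat.add_sub_cancel, Fintype.card_fin]
    rw [pow_succ]
    push_cast
    field_simp
    ring
  · subst hk1
    rw [Matrix.det_fin_one]
    norm_num



noncomputable def Mmat (k m : ℕ) (σ ε : ℝ) : Matrix (Fin k × Fin m) (Fin k × Fin m) ℝ :=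
  Matrix.of fun p q => if p = q then 1 else if p.2 = q.2 then σ else ε

noncomputable def Cmat (k : ℕ) (σ ε : ℝ) : Matrix (Fin k) (Fin k) ℝ :=
  Matrix.of fun r r' => if r = r' then 1 - ε else σ - ε

lemma Mmat_split (k m : ℕ) (σ ε : ℝ) : Mmat k m σ ε
    = blockDiagonal (fun _ : Fin m => Cmat k σ ε) + ε • Matrix.of (fun _ _ => (1:ℝ)) := by
  ext ⟨r, b⟩ ⟨r', b'⟩
  simp only [Mmat, Cmat, Matrix.add_apply, Matrix.smul_apply, Matrix.blockDiagonal_apply,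
    Matrix.of_apply, smul_eq_mul, mul_one, Prod.mk.injEq]
  by_cases hb : b = b'
  · by_cases hr : r = r'
    · subst hb; subst hr; simp
    · subst hb; simp [hr]
  · simp [hb]

lemma Mmat_zero (k m : ℕ) (σ : ℝ) :
    Mmat k m σ 0 = blockDiagonal (fun _ : Fin m => Cmat k σ 0) := by
  rw [Mmat_split]
  simp

lemma Cmat_rowsum (k : ℕ) (σ ε : ℝ) (r : Fin k) :
    ∑ r', Cmat k σ ε r r' = 1 + ((k:ℝ)-1)*σ - (k:ℝ)*ε := by
  unfold Cmat
  rw [show (∑ r', Matrix.of (fun r r' : Fin k => if r = r' then 1 - ε else σ - ε) r r')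
    = ∑ r' : Fin k, (if r = r' then 1 - ε else σ - ε) from rfl, sum_ite_row]
  ring

lemma bd_rowsum (k m : ℕ) (σ ε : ℝ) (p : Fin k × Fin m) :
    ∑ q, blockDiagonal (fun _ : Fin m => Cmat k σ ε) p q
      = 1 + ((k:ℝ)-1)*σ - (k:ℝ)*ε := by
  rw [Fintype.sum_prod_type]
  have h : ∀ r' : Fin k, ∑ b' : Fin m,
      blockDiagonal (fun _ : Fin m => Cmat k σ ε) p (r', b') = Cmat k σ ε p.1 r' := by
    intro r'
    have : ∀ b' : Fin m, blockDiagonal (fun _ : Fin m => Cmat k σ ε) p (r', b')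
        = if p.2 = b' then Cmat k σ ε p.1 r' else 0 := by
      intro b'
      by_cases hb : p.2 = b'
      · rw [if_pos hb, ← hb]
        exact Matrix.blockDiagonal_apply_eq _ _ _ _
      · rw [if_neg hb]
        exact Matrix.blockDiagonal_apply_ne _ _ _ hb
    rw [Finset.sum_congr rfl fun b' _ => this b', Finset.sum_ite_eq Finset.univ p.2]
    simp
  rw [Finset.sum_congr rfl fun r' _ => h r', Cmat_rowsum]

lemma Cmat_det (k : ℕ) (hk : 0 < k) (σ ε : ℝ) (h1 : (1:ℝ) - σ ≠ 0 ∨ k = 1) :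
    (Cmat k σ ε).det = (1-σ)^(k-1) * (1 + ((k:ℝ)-1)*σ - (k:ℝ)*ε) := by
  have h1' : (1:ℝ) - ε ≠ σ - ε ∨ k = 1 := by
    rcases h1 with h | h
    · left; intro hc; apply h; linarith
    · right; exact h
  rw [show Cmat k σ ε = Matrix.of fun i j : Fin k => if i = j then 1-ε else σ-ε from rfl,
    det_ite hk _ _ h1']
  ring

lemma Mmat_det (k m : ℕ) (hk : 0 < k) (hm : 0 < m) (σ ε : ℝ)
    (h1 : (1:ℝ) - σ ≠ 0 ∨ k = 1) (hc : 1 + ((k:ℝ)-1)*σ - (k:ℝ)*ε ≠ 0) :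
    (Mmat k m σ ε).det = (1-σ)^(m*(k-1)) * (1+((k:ℝ)-1)*σ - (k:ℝ)*ε)^(m-1)
      * (1+((k:ℝ)-1)*σ + ((m:ℝ)-1)*(k:ℝ)*ε) := by
  set sk : ℝ := 1 + ((k:ℝ)-1)*σ - (k:ℝ)*ε with hsk
  have hfact : Mmat k m σ ε
      = blockDiagonal (fun _ : Fin m => Cmat k σ ε)
        * (1 + Matrix.replicateCol Unit (fun _ => ε / sk) * Matrix.replicateRow Unit (fun _ => (1:ℝ))) := by
    rw [Matrix.mul_add, Matrix.mul_one, Mmat_split]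
    congr 1
    ext p q
    rw [Matrix.mul_apply]
    have h2 : ∀ l, blockDiagonal (fun _ : Fin m => Cmat k σ ε) p l
        * (Matrix.replicateCol Unit (fun _ => ε / sk) * Matrix.replicateRow Unit (fun _ => (1:ℝ))) l q
        = blockDiagonal (fun _ : Fin m => Cmat k σ ε) p l * (ε / sk) := by
      intro l
      rw [Matrix.mul_apply]
      simp
    rw [Finset.sum_congr rfl fun l _ => h2 l, ← Finset.sum_mul, bd_rowsum]
    rw [show (1 + ((k:ℝ)-1)*σ - (k:ℝ)*ε) = sk from rfl]
    simp only [Matrix.smul_apply, Matrix.of_apply, smul_eq_mul, mul_one]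
    field_simp
  rw [hfact, Matrix.det_mul, Matrix.det_blockDiagonal, Matrix.det_one_add_replicateCol_mul_replicateRow,
    Cmat_det k hk σ ε h1]
  rw [Finset.prod_const, Finset.card_univ, Fintype.card_fin]
  have hdot : (fun _ : Fin k × Fin m => (1:ℝ)) ⬝ᵥ (fun _ : Fin k × Fin m => ε / sk)
      = ((k:ℝ)*(m:ℝ)) * (ε/sk) := by
    simp [dotProduct, Finset.card_univ]
    try ring
  rw [hdot]
  obtain ⟨n, rfl⟩ : ∃ n, m = n + 1 := ⟨m - 1, (Nat.succ_pred_eq_of_pos hm).symm⟩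
  simp only [Nat.add_sub_cancel]
  rw [mul_pow, ← pow_mul, Nat.mul_comm (k-1) (n+1), pow_succ sk n]
  push_cast
  field_simp
  ring







noncomputable def Kmat (k m : ℕ) : Matrix (Fin k × Fin m) (Fin k × Fin m) ℝ :=
  Matrix.of fun p q => if p.2 = q.2 then 0 else 1

lemma Mmat_splitK (k m : ℕ) (σ ε : ℝ) :
    Mmat k m σ ε = Mmat k m σ 0 + ε • Kmat k m := by
  ext p q
  simp only [Mmat, Kmat, Matrix.add_apply, Matrix.smul_apply, Matrix.of_apply, smul_eq_mul]
  by_cases hpq : p = q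
  · simp [hpq]
  · by_cases hb : p.2 = q.2
    · simp [hpq, hb]
    · simp [hpq, hb]

lemma Mmat_zero_inv (k m : ℕ) (σ : ℝ) (hdet : (Cmat k σ 0).det ≠ 0) :
    (Mmat k m σ 0)⁻¹ = blockDiagonal (fun _ : Fin m => (Cmat k σ 0)⁻¹) := by
  apply Matrix.inv_eq_right_inv
  rw [Mmat_zero, ← Matrix.blockDiagonal_mul]
  have h : (fun _ : Fin m => Cmat k σ 0 * (Cmat k σ 0)⁻¹)
      = fun _ : Fin m => (1 : Matrix (Fin k) (Fin k) ℝ) := by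
    funext b
    exact Matrix.mul_nonsing_inv _ (isUnit_iff_ne_zero.mpr hdet)
  rw [h]
  exact Matrix.blockDiagonal_one

lemma Mmat_trace (k m : ℕ) (σ ε : ℝ) (hdet : (Cmat k σ 0).det ≠ 0) :
    ((Mmat k m σ 0)⁻¹ * Mmat k m σ ε).trace = ((k*m : ℕ) : ℝ) := by
  have hdetM : (Mmat k m σ 0).det ≠ 0 := by
    rw [Mmat_zero, Matrix.det_blockDiagonal]
    exact Finset.prod_ne_zero_iff.mpr fun _ _ => hdet
  rw [Mmat_splitK k m σ ε, Matrix.mul_add, Matrix.trace_add,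
    Matrix.nonsing_inv_mul _ (isUnit_iff_ne_zero.mpr hdetM), Matrix.trace_one]
  have hzero : ((Mmat k m σ 0)⁻¹ * (ε • Kmat k m)).trace = 0 := by
    rw [Matrix.mul_smul, Matrix.trace_smul]
    have htr : ((Mmat k m σ 0)⁻¹ * Kmat k m).trace = 0 := by
      have hterm : ∀ p q : Fin k × Fin m, (Mmat k m σ 0)⁻¹ p q * Kmat k m q p = 0 := by
        intro p q
        by_cases h : p.2 = q.2
        · have hK : Kmat k m q p = 0 := by simp [Kmat, h.symm]
          rw [hK, mul_zero]
        · rw [Mmat_zero_inv k m σ hdet]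
          have hbd : blockDiagonal (fun _ : Fin m => (Cmat k σ 0)⁻¹) p q = 0 := by
            rw [show p = (p.1, p.2) from rfl, show q = (q.1, q.2) from rfl]
            exact Matrix.blockDiagonal_apply_ne _ _ _ h
          rw [hbd, zero_mul]
      have hdiag : ∀ p : Fin k × Fin m, ((Mmat k m σ 0)⁻¹ * Kmat k m) p p = 0 := by
        intro p
        rw [Matrix.mul_apply]
        exact Finset.sum_eq_zero fun q _ => hterm p q
      unfold Matrix.trace Matrix.diag
      exact Finset.sum_eq_zero fun p _ => hdiag p
    rw [htr, smul_zero]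
  rw [hzero, add_zero]
  simp [Fintype.card_prod]

lemma Mmat_rowblock (k m : ℕ) (σ ε : ℝ) (p : Fin k × Fin m) (b' : Fin m) :
    ∑ r' : Fin k, Mmat k m σ ε p (r', b')
      = if p.2 = b' then 1 + ((k:ℝ)-1)*σ else (k:ℝ)*ε := by
  by_cases hb : p.2 = b'
  · rw [if_pos hb]
    have h1 : ∀ r' : Fin k, Mmat k m σ ε p (r', b') = if p.1 = r' then 1 else σ := by
      intro r'
      by_cases hr : p.1 = r'
      · have hp : p = (r', b') := Prod.ext hr hb
        simp [Mmat, hp, hr]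
      · have hp : p ≠ (r', b') := by
          intro hc; exact hr (congrArg Prod.fst hc)
        simp [Mmat, hp, hr, hb]
    rw [Finset.sum_congr rfl fun r' _ => h1 r', sum_ite_row]
  · rw [if_neg hb]
    have h1 : ∀ r' : Fin k, Mmat k m σ ε p (r', b') = ε := by
      intro r'
      have hp : p ≠ (r', b') := fun hc => hb (congrArg Prod.snd hc)
      simp [Mmat, hp, hb]
    rw [Finset.sum_congr rfl fun r' _ => h1 r', Finset.sum_const]
    simp [Finset.card_univ]

lemma Mmat_mulVec_block (k m : ℕ) (σ ε : ℝ) (w : Fin m → ℝ) (p : Fin k × Fin m) :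
    (Mmat k m σ ε *ᵥ fun q : Fin k × Fin m => w q.2) p
      = ∑ b' : Fin m, (if p.2 = b' then 1 + ((k:ℝ)-1)*σ else (k:ℝ)*ε) * w b' := by
  unfold Matrix.mulVec dotProduct
  rw [Fintype.sum_prod_type, Finset.sum_comm]
  refine Finset.sum_congr rfl fun b' _ => ?_
  have hbeta : ∑ x : Fin k, (fun j => Mmat k m σ ε p j) (x, b')
        * (fun q : Fin k × Fin m => w q.2) (x, b')
      = ∑ x : Fin k, Mmat k m σ ε p (x, b') * w b' := rfl
  rw [hbeta, ← Finset.sum_mul, Mmat_rowblock]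

lemma Mmat_eig (k m : ℕ) (σ ε : ℝ) (w : Fin m → ℝ) (c : ℝ)
    (hw : ∀ b : Fin m, ∑ b' : Fin m,
      (if b = b' then 1 + ((k:ℝ)-1)*σ else (k:ℝ)*ε) * w b' = c * w b) :
    Mmat k m σ ε *ᵥ (fun q : Fin k × Fin m => w q.2)
      = c • (fun q : Fin k × Fin m => w q.2) := by
  funext p
  rw [Mmat_mulVec_block, hw p.2]
  simp

lemma Mmat_eig_one (k m : ℕ) (σ ε : ℝ) :
    Mmat k m σ ε *ᵥ (fun q : Fin k × Fin m => (fun _ : Fin m => (1:ℝ)) q.2)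
      = (1 + ((k:ℝ)-1)*σ + ((m:ℝ)-1)*(k:ℝ)*ε)
        • (fun q : Fin k × Fin m => (fun _ : Fin m => (1:ℝ)) q.2) := by
  refine Mmat_eig k m σ ε (fun _ : Fin m => (1:ℝ)) _ ?_
  intro b
  simp only [mul_one]
  rw [sum_ite_row]
  ring

lemma Mmat_eig_diff (k m : ℕ) (σ ε : ℝ) (b0 b1 : Fin m) (hne : b0 ≠ b1) :
    Mmat k m σ ε *ᵥ (fun q : Fin k × Fin m =>
        (fun b : Fin m => if b = b0 then (1:ℝ) else if b = b1 then -1 else 0) q.2)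
      = (1 + ((k:ℝ)-1)*σ - (k:ℝ)*ε)
        • (fun q : Fin k × Fin m =>
            (fun b : Fin m => if b = b0 then (1:ℝ) else if b = b1 then -1 else 0) q.2) := by
  refine Mmat_eig k m σ ε (fun b : Fin m => if b = b0 then (1:ℝ) else if b = b1 then -1 else 0) _ ?_
  intro b
  beta_reduce
  have hsplit : ∀ b' : Fin m,
      (if b' = b0 then (1:ℝ) else if b' = b1 then -1 else 0)
        = (if b' = b0 then (1:ℝ) else 0) + (if b' = b1 then (-1:ℝ) else 0) := by
    intro b'
    by_cases h0 : b' = b0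
    · subst h0; simp [hne]
    · by_cases h1 : b' = b1
      · have hb10 : b1 ≠ b0 := fun h => hne h.symm
        rw [h1]
        simp [hb10]
      · simp [h0, h1]
  have hsum : (∑ b' : Fin m, (if b = b' then 1 + ((k:ℝ)-1)*σ else (k:ℝ)*ε)
        * (if b' = b0 then (1:ℝ) else if b' = b1 then -1 else 0))
      = (∑ b' : Fin m,
        ((if b = b' then 1 + ((k:ℝ)-1)*σ else (k:ℝ)*ε) * (if b' = b0 then (1:ℝ) else 0)
        + (if b = b' then 1 + ((k:ℝ)-1)*σ else (k:ℝ)*ε) * (if b' = b1 then (-1:ℝ) else 0))) := by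
    refine Finset.sum_congr rfl fun b' _ => ?_
    rw [hsplit b', mul_add]
  rw [hsum, Finset.sum_add_distrib]
  have e0 : (∑ b' : Fin m, (if b = b' then 1 + ((k:ℝ)-1)*σ else (k:ℝ)*ε)
      * (if b' = b0 then (1:ℝ) else 0))
      = (if b = b0 then 1 + ((k:ℝ)-1)*σ else (k:ℝ)*ε) := by
    have hterm : ∀ b' : Fin m, (if b = b' then 1 + ((k:ℝ)-1)*σ else (k:ℝ)*ε)
        * (if b' = b0 then (1:ℝ) else 0)
        = (if b' = b0 then (if b = b' then 1 + ((k:ℝ)-1)*σ else (k:ℝ)*ε) else 0) := by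
      intro b'; rw [mul_ite, mul_one, mul_zero]
    rw [Finset.sum_congr rfl fun b' _ => hterm b', Finset.sum_ite_eq' Finset.univ b0]
    simp
  have e1 : (∑ b' : Fin m, (if b = b' then 1 + ((k:ℝ)-1)*σ else (k:ℝ)*ε)
      * (if b' = b1 then (-1:ℝ) else 0))
      = -(if b = b1 then 1 + ((k:ℝ)-1)*σ else (k:ℝ)*ε) := by
    have hterm : ∀ b' : Fin m, (if b = b' then 1 + ((k:ℝ)-1)*σ else (k:ℝ)*ε)
        * (if b' = b1 then (-1:ℝ) else 0)
        = (if b' = b1 then -(if b = b' then 1 + ((k:ℝ)-1)*σ else (k:ℝ)*ε) else 0) := by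
      intro b'; rw [mul_ite, mul_neg, mul_one, mul_zero]
    rw [Finset.sum_congr rfl fun b' _ => hterm b', Finset.sum_ite_eq' Finset.univ b1]
    simp
  rw [e0, e1]
  by_cases h0 : b = b0
  · subst h0
    rw [if_pos rfl, if_neg hne, if_pos rfl]
    ring
  · by_cases h1 : b = b1
    · subst h1
      rw [if_neg h0, if_pos rfl, if_neg h0, if_pos rfl]
      ring
    · rw [if_neg h0, if_neg h1, if_neg h0, if_neg h1]
      ring

lemma eig_pos {n : Type*} [Fintype n] {A : Matrix n n ℝ} (hA : A.PosDef)
    {v : n → ℝ} (hv : v ≠ 0) {c : ℝ} (h : A *ᵥ v = c • v) : 0 < c := by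
  have h2 := hA.dotProduct_mulVec_pos hv
  rw [h] at h2
  have h3 : star v ⬝ᵥ (c • v) = c * (v ⬝ᵥ v) := by
    unfold dotProduct
    rw [Finset.mul_sum]
    refine Finset.sum_congr rfl fun i _ => ?_
    simp only [Pi.smul_apply, smul_eq_mul, Pi.star_apply, star_trivial]
    ring
  rw [h3] at h2
  have hvv : 0 < v ⬝ᵥ v := by
    obtain ⟨i, hi⟩ := Function.ne_iff.mp hv
    unfold dotProduct
    refine Finset.sum_pos' (fun j _ => mul_self_nonneg (v j))
      ⟨i, Finset.mem_univ i, mul_self_pos.mpr hi⟩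
  rcases mul_pos_iff.mp h2 with ⟨hc, _⟩ | ⟨_, hvv'⟩
  · exact hc
  · linarith

lemma eig_pos_reindex {n o : Type*} [Fintype n] [Fintype o] [DecidableEq n] [DecidableEq o]
    {E : n ≃ o} {M : Matrix n n ℝ} (hpd : ((Matrix.reindex E E) M).PosDef)
    {w : n → ℝ} (hw : w ≠ 0) {c : ℝ} (h : M *ᵥ w = c • w) : 0 < c := by
  refine eig_pos hpd (v := w ∘ E.symm) ?_ ?_
  · intro hc
    apply hw
    funext i
    have := congrFun hc (E i)
    simpa using this
  · rw [Matrix.reindex_apply, Matrix.submatrix_mulVec_equiv]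
    have hv : (w ∘ E.symm) ∘ (E.symm).symm = w := by funext i; simp
    rw [hv, h]
    funext i
    simp




def Ekm (k m d : ℕ) (h : m * k = d) : Fin k × Fin m ≃ Fin d :=
  (Equiv.prodComm (Fin k) (Fin m)).trans ((finProdFinEquiv).trans (finCongr h))

lemma Ekm_val (k m d : ℕ) (h : m * k = d) (p : Fin k × Fin m) :
    ((Ekm k m d h p : Fin d) : ℕ) = (p.1 : ℕ) + k * (p.2 : ℕ) := rfl

lemma Ekm_div (k m d : ℕ) (hk : 0 < k) (h : m * k = d) (p : Fin k × Fin m) :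
    ((Ekm k m d h p : Fin d) : ℕ) / k = (p.2 : ℕ) := by
  rw [Ekm_val, Nat.add_mul_div_left _ _ hk, Nat.div_eq_of_lt p.1.2, zero_add]

lemma SigmaMat_reindex (d k m : ℕ) (hk : 0 < k) (h : m * k = d) (σ ε : ℝ) :
    SigmaMat d k σ ε = (Matrix.reindex (Ekm k m d h) (Ekm k m d h)) (Mmat k m σ ε) := by
  set E := Ekm k m d h with hE
  have key : ∀ p q : Fin k × Fin m, SigmaMat d k σ ε (E p) (E q) = Mmat k m σ ε p q := by
    intro p q
    unfold SigmaMat Mmat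
    simp only [Matrix.of_apply]
    by_cases hpq : p = q
    · simp [hpq]
    · have h1 : ¬ (E p = E q) := fun hc => hpq (E.injective hc)
      rw [if_neg h1, if_neg hpq]
      have h2 : (((E p : Fin d) : ℕ) / k = ((E q : Fin d) : ℕ) / k) ↔ (p.2 = q.2) := by
        rw [hE, Ekm_div k m d hk h, Ekm_div k m d hk h]
        exact Fin.val_eq_val _ _
      by_cases hb : p.2 = q.2
      · rw [if_pos (h2.mpr hb), if_pos hb]
      · rw [if_neg (fun hc => hb (h2.mp hc)), if_neg hb]
  ext i j
  rw [Matrix.reindex_apply, Matrix.submatrix_apply, ← key (E.symm i) (E.symm j),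
    E.apply_symm_apply, E.apply_symm_apply]

lemma trace_reindex {n o : Type*} [Fintype n] [Fintype o] (E : n ≃ o) (X : Matrix n n ℝ) :
    ((Matrix.reindex E E) X).trace = X.trace := by
  unfold Matrix.trace Matrix.diag
  rw [Matrix.reindex_apply]
  exact Equiv.sum_comp E.symm fun j => X j j

lemma reindex_mul {n o : Type*} [Fintype n] [Fintype o] [DecidableEq n] [DecidableEq o]
    (E : n ≃ o) (X Y : Matrix n n ℝ) :
    (Matrix.reindex E E) X * (Matrix.reindex E E) Y = (Matrix.reindex E E) (X * Y) := by
  rw [Matrix.reindex_apply, Matrix.reindex_apply, Matrix.reindex_apply,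
    Matrix.submatrix_mul_equiv]

lemma Mmat_eig_inner (k m : ℕ) (σ ε : ℝ) (p0 p1 : Fin k × Fin m)
    (hne : p0 ≠ p1) (hbb : p0.2 = p1.2) :
    Mmat k m σ ε *ᵥ (fun q : Fin k × Fin m =>
        if q = p0 then (1:ℝ) else if q = p1 then -1 else 0)
      = (1 - σ) • (fun q : Fin k × Fin m =>
        if q = p0 then (1:ℝ) else if q = p1 then -1 else 0) := by
  funext p
  have hmv : (Mmat k m σ ε *ᵥ (fun q : Fin k × Fin m =>
      if q = p0 then (1:ℝ) else if q = p1 then -1 else 0)) p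
      = Mmat k m σ ε p p0 - Mmat k m σ ε p p1 := by
    unfold Matrix.mulVec dotProduct
    have hsplit : ∀ q : Fin k × Fin m,
        (if q = p0 then (1:ℝ) else if q = p1 then -1 else 0)
          = (if q = p0 then (1:ℝ) else 0) + (if q = p1 then (-1:ℝ) else 0) := by
      intro q
      by_cases h0 : q = p0
      · have hq1 : q ≠ p1 := by rw [h0]; exact hne
        simp [h0, hq1, hne]
      · by_cases h1 : q = p1
        · have hne' : p1 ≠ p0 := fun hc => hne hc.symm
          rw [h1]
          simp [hne']
        · simp [h0, h1]
    have hterm : ∀ q : Fin k × Fin m, Mmat k m σ ε p q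
        * (if q = p0 then (1:ℝ) else if q = p1 then -1 else 0)
        = (if q = p0 then Mmat k m σ ε p q else 0)
          + (if q = p1 then -(Mmat k m σ ε p q) else 0) := by
      intro q
      rw [hsplit q, mul_add, mul_ite, mul_one, mul_zero, mul_ite, mul_neg, mul_one, mul_zero]
    rw [Finset.sum_congr rfl fun q _ => hterm q, Finset.sum_add_distrib,
      Finset.sum_ite_eq' Finset.univ p0, Finset.sum_ite_eq' Finset.univ p1]
    simp
    try ring
  rw [hmv]
  simp only [Pi.smul_apply, smul_eq_mul]
  by_cases h0 : p = p0
  · rw [if_pos h0, h0]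
    have h00 : Mmat k m σ ε p0 p0 = (1:ℝ) := by simp [Mmat]
    have h01 : Mmat k m σ ε p0 p1 = σ := by simp [Mmat, hne, hbb]
    rw [h00, h01]; ring
  · rw [if_neg h0]
    by_cases h1 : p = p1
    · rw [if_pos h1, h1]
      have hne' : p1 ≠ p0 := fun hc => hne hc.symm
      have h10 : Mmat k m σ ε p1 p0 = σ := by simp [Mmat, hne', hbb.symm]
      have h11 : Mmat k m σ ε p1 p1 = (1:ℝ) := by simp [Mmat]
      rw [h10, h11]; ring
    · rw [if_neg h1]
      by_cases hb : p.2 = p0.2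
      · have ha : Mmat k m σ ε p p0 = σ := by simp [Mmat, h0, hb]
        have hc : Mmat k m σ ε p p1 = σ := by simp [Mmat, h1, hb.trans hbb]
        rw [ha, hc]; ring
      · have ha : Mmat k m σ ε p p0 = ε := by simp [Mmat, h0, hb]
        have hc : Mmat k m σ ε p p1 = ε := by
          have hb' : ¬ p.2 = p1.2 := fun hcc => hb (hcc.trans hbb.symm)
          simp [Mmat, h1, hb']
        rw [ha, hc]; ring


end Aux

set_option maxHeartbeats 1000000 in
/-- for `k ∣ d` and both covariances positive definite,
`KL(f_{Σ^{(d,k)}_{σ,ε}} ‖ f_{Σ^{(d,k)}_σ}) =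
  -(1/2) log(1 + (d-k)ε/(1+(k-1)σ)) - (1/2)(d/k - 1) log(1 - kε/(1+(k-1)σ))`. -/
theorem stmt14 (d k : ℕ) (hk : 0 < k) (hkd : k ∣ d) (σ ε : ℝ)
    (hpd : (SigmaMat d k σ ε).PosDef) (hpd0 : (SigmaMat d k σ 0).PosDef) :
    ∫ x : Fin d → ℝ,
        Real.log (gaussianDensity (SigmaMat d k σ ε) x /
            gaussianDensity (SigmaMat d k σ 0) x) *
          gaussianDensity (SigmaMat d k σ ε) x
      = -(1 / 2) * Real.log (1 + ((d : ℝ) - k) * ε / (1 + ((k : ℝ) - 1) * σ))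
        - (1 / 2) * (((d / k : ℕ) : ℝ) - 1) *
            Real.log (1 - (k : ℝ) * ε / (1 + ((k : ℝ) - 1) * σ)) := by
  classical
  set m := d / k with hmdef
  have hmk : m * k = d := Nat.div_mul_cancel hkd
  by_cases hm1 : m ≤ 1
  · -- degenerate case: the two matrices coincide
    have hAB : SigmaMat d k σ ε = SigmaMat d k σ 0 := by
      have hdk : d ≤ k := by
        calc d = m * k := hmk.symm
        _ ≤ 1 * k := Nat.mul_le_mul_right k hm1
        _ = k := one_mul k
      ext i j
      unfold SigmaMat
      by_cases hij : i = j
      · simp [hij]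
      · have hi : (i:ℕ)/k = 0 := Nat.div_eq_of_lt (lt_of_lt_of_le i.2 hdk)
        have hj : (j:ℕ)/k = 0 := Nat.div_eq_of_lt (lt_of_lt_of_le j.2 hdk)
        simp [hij, hi, hj]
    have hzero : ∫ x : Fin d → ℝ,
        Real.log (gaussianDensity (SigmaMat d k σ 0) x /
          gaussianDensity (SigmaMat d k σ 0) x) * gaussianDensity (SigmaMat d k σ 0) x = 0 := by
      have h0 : (fun x : Fin d → ℝ => Real.log (gaussianDensity (SigmaMat d k σ 0) x /
          gaussianDensity (SigmaMat d k σ 0) x) * gaussianDensity (SigmaMat d k σ 0) x)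
          = fun _ => 0 := by
        funext x
        rw [div_self (gaussianDensity_pos hpd0.det_pos x).ne', Real.log_one, zero_mul]
      rw [h0, integral_zero]
    rw [hAB, hzero]
    have hm' : m = 0 ∨ m = 1 := Nat.le_one_iff_eq_zero_or_eq_one.mp hm1
    rcases hm' with hme | hme
    · have hd0 : d = 0 := by rw [← hmk, hme, zero_mul]
      rw [hme, hd0]
      have harg : 1 + ((0:ℕ):ℝ)*ε/(1 + ((k:ℝ)-1)*σ) - (k:ℝ)*ε/(1 + ((k:ℝ)-1)*σ)
          = 1 - (k:ℝ)*ε/(1 + ((k:ℝ)-1)*σ) := by push_cast; ring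
      have harg2 : 1 + (((0:ℕ):ℝ) - (k:ℝ))*ε/(1 + ((k:ℝ)-1)*σ)
          = 1 - (k:ℝ)*ε/(1 + ((k:ℝ)-1)*σ) := by push_cast; ring
      rw [harg2]
      push_cast
      ring
    · have hdk : d = k := by rw [← hmk, hme, one_mul]
      rw [hme, hdk]
      have harg2 : 1 + ((k:ℝ) - (k:ℝ))*ε/(1 + ((k:ℝ)-1)*σ) = 1 := by ring
      rw [harg2, Real.log_one]
      push_cast
      ring
  · -- main case : m ≥ 2
    have hm2 : 2 ≤ m := by omega
    have hm0 : 0 < m := by omega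
    have hAr := SigmaMat_reindex d k m hk hmk σ ε
    have hBr := SigmaMat_reindex d k m hk hmk σ 0
    have hpdA := hpd
    have hpdB := hpd0
    rw [hAr] at hpdA
    rw [hBr] at hpdB
    -- positivity of the eigenvalues
    have hone : (fun q : Fin k × Fin m => (fun _ : Fin m => (1:ℝ)) q.2) ≠ 0 := by
      intro hc
      have := congrFun hc (⟨0, hk⟩, ⟨0, hm0⟩)
      simpa using this
    have hcplus : 0 < 1 + ((k:ℝ)-1)*σ + ((m:ℝ)-1)*(k:ℝ)*ε :=
      eig_pos_reindex hpdA hone (Mmat_eig_one k m σ ε)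
    have hs : 0 < 1 + ((k:ℝ)-1)*σ := by
      have := eig_pos_reindex hpdB hone (Mmat_eig_one k m σ 0)
      simpa using this
    have hb01 : (⟨0, hm0⟩ : Fin m) ≠ ⟨1, hm2⟩ :=
      Fin.ne_of_val_ne (show (0:ℕ) ≠ 1 by norm_num)
    have hdiffne : (fun q : Fin k × Fin m =>
        (fun b : Fin m => if b = (⟨0, hm0⟩ : Fin m) then (1:ℝ)
          else if b = ⟨1, hm2⟩ then -1 else 0) q.2) ≠ 0 := by
      intro hc
      have := congrFun hc (⟨0, hk⟩, ⟨0, hm0⟩)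
      simpa using this
    have hcminus : 0 < 1 + ((k:ℝ)-1)*σ - (k:ℝ)*ε :=
      eig_pos_reindex hpdA hdiffne (Mmat_eig_diff k m σ ε ⟨0, hm0⟩ ⟨1, hm2⟩ hb01)
    have h1σ : (1:ℝ) - σ ≠ 0 ∨ k = 1 := by
      by_cases hk1 : k = 1
      · right; exact hk1
      · left
        have hk2 : 2 ≤ k := by omega
        have hp01 : ((⟨0, hk⟩ : Fin k), (⟨0, hm0⟩ : Fin m))
            ≠ ((⟨1, hk2⟩ : Fin k), (⟨0, hm0⟩ : Fin m)) := fun hc =>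
          absurd (congrArg Prod.fst hc) (Fin.ne_of_val_ne (show (0:ℕ) ≠ 1 by norm_num))
        have hvne : (fun q : Fin k × Fin m =>
            if q = ((⟨0, hk⟩ : Fin k), (⟨0, hm0⟩ : Fin m)) then (1:ℝ)
            else if q = ((⟨1, hk2⟩ : Fin k), (⟨0, hm0⟩ : Fin m)) then -1 else 0) ≠ 0 := by
          intro hc
          have := congrFun hc (⟨0, hk⟩, ⟨0, hm0⟩)
          simpa using this
        have h := eig_pos_reindex hpdB hvne
          (Mmat_eig_inner k m σ 0 _ _ hp01 rfl)
        exact (by linarith : (0:ℝ) < 1 - σ).ne'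
    -- determinants
    have hdetA : (SigmaMat d k σ ε).det
        = (1-σ)^(m*(k-1)) * (1 + ((k:ℝ)-1)*σ - (k:ℝ)*ε)^(m-1)
          * (1 + ((k:ℝ)-1)*σ + ((m:ℝ)-1)*(k:ℝ)*ε) := by
      rw [hAr, Matrix.det_reindex_self, Mmat_det k m hk hm0 σ ε h1σ hcminus.ne']
    have hdetB : (SigmaMat d k σ 0).det = (1-σ)^(m*(k-1)) * (1 + ((k:ℝ)-1)*σ)^m := by
      rw [hBr, Matrix.det_reindex_self, Mmat_det k m hk hm0 σ 0 h1σ (by simpa using hs.ne')]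
      simp only [mul_zero, sub_zero, add_zero]
      rw [mul_assoc, ← pow_succ]
      exact congrArg (fun x => ((1:ℝ)-σ)^(m*(k-1)) * x)
        (congrArg (fun n => ((1:ℝ) + ((k:ℝ)-1)*σ) ^ n) (Nat.succ_pred_eq_of_pos hm0))
    -- trace
    have hpow : ((1:ℝ)-σ)^(k-1) ≠ 0 := by
      rcases h1σ with h | h
      · exact pow_ne_zero _ h
      · rw [h]; norm_num
    have hdetC0 : (Cmat k σ 0).det ≠ 0 := by
      rw [Cmat_det k hk σ 0 h1σ]
      simp only [mul_zero, sub_zero]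
      exact mul_ne_zero hpow hs.ne'
    have htr : ((SigmaMat d k σ 0)⁻¹ * SigmaMat d k σ ε).trace = ((d:ℕ):ℝ) := by
      rw [hAr, hBr, Matrix.inv_reindex, reindex_mul, trace_reindex,
        Mmat_trace k m σ ε hdetC0]
      exact_mod_cast congrArg (Nat.cast (R := ℝ)) (by rw [Nat.mul_comm]; exact hmk)
    rw [gaussianKL hpd hpd0, htr, hdetA, hdetB]
    have hXpow : ((1:ℝ)-σ)^(m*(k-1)) ≠ 0 := by
      rcases h1σ with h | h
      · exact pow_ne_zero _ h
      · rw [h]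
        norm_num
    rw [Real.log_mul hXpow (pow_ne_zero _ hs.ne'), Real.log_pow,
      Real.log_mul (mul_ne_zero hXpow (pow_ne_zero _ hcminus.ne')) hcplus.ne',
      Real.log_mul hXpow (pow_ne_zero _ hcminus.ne'), Real.log_pow, Real.log_pow,
      Real.log_pow]
    have hdr : (d:ℝ) = (m:ℝ)*(k:ℝ) := by exact_mod_cast hmk.symm
    have hr1 : 1 + ((d:ℝ) - k)*ε/(1 + ((k:ℝ)-1)*σ)
        = (1 + ((k:ℝ)-1)*σ + ((m:ℝ)-1)*(k:ℝ)*ε)/(1 + ((k:ℝ)-1)*σ) := by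
      rw [add_div, div_self hs.ne', hdr]
      ring
    have hr2 : 1 - (k:ℝ)*ε/(1 + ((k:ℝ)-1)*σ)
        = (1 + ((k:ℝ)-1)*σ - (k:ℝ)*ε)/(1 + ((k:ℝ)-1)*σ) := by
      rw [sub_div, div_self hs.ne']
    rw [hr1, hr2, Real.log_div hcplus.ne' hs.ne', Real.log_div hcminus.ne' hs.ne']
    have hmcast : ((m - 1 : ℕ) : ℝ) = (m:ℝ) - 1 := by
      rw [Nat.cast_sub hm0]
      norm_num
    rw [hmcast]
    ring
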